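/- Let ξ_j ~ N(0, 1/m) i.i.d., r a positive integer, c_1 > 0, and suppose s_j ≥ c_1 (m/j)^r for j = 1, …, m. Then for any Λ with 1 ≤ Λ ≤ m: P( Σ_{j=1}^m s_j² ξ_j² < c_1² Λ^{2r−1} ) < (60 m/Λ)^{r/2} e^{−m(r − 1/2)/Λ}. -/

import Mathlib

open MeasureTheory ProbabilityTheory Real
open scoped ENNReal NNReal

set_option maxHeartbeats 1000000

lemma lintegral_pi_prod : ∀ {n : ℕ} (μ : Fin n → Measure ℝ), (∀ i, SigmaFinite (μ i)) →
    ∀ f : Fin n → ℝ → ℝ≥0∞, (∀ i, Measurable (f i)) →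
    ∫⁻ x : Fin n → ℝ, ∏ i, f i (x i) ∂(Measure.pi μ) = ∏ i, ∫⁻ t, f i t ∂(μ i) := by
  intro n
  induction n with
  | zero => intro μ _ f _; simp
  | succ n ih =>
    intro μ hσ f hf
    haveI := hσ
    rw [((measurePreserving_piFinSuccAbove μ 0).symm).lintegral_map_equiv
      (fun x => ∏ i, f i (x i)) (MeasurableEquiv.piFinSuccAbove _ 0).symm]
    simp_rw [MeasurableEquiv.piFinSuccAbove_symm_apply, Fin.insertNthEquiv,
      Fin.prod_univ_succ, Fin.insertNth_zero, Equiv.coe_fn_mk, Fin.cons_zero, Fin.cons_succ,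
      Fin.zero_succAbove, cast_eq]
    have hmeas : Measurable fun y : Fin n → ℝ => ∏ i : Fin n, f i.succ (y i) :=
      Finset.measurable_prod _ fun i _ => (hf i.succ).comp (measurable_pi_apply i)
    rw [lintegral_prod_mul (hf 0).aemeasurable hmeas.aemeasurable]
    rw [ih _ (fun i => inferInstance) _ (fun i => hf i.succ)]

lemma gauss_exp_le_one (v : ℝ≥0) (a : ℝ) (ha : 0 ≤ a) :
    ∫⁻ x, ENNReal.ofReal (Real.exp (-(a * x ^ 2))) ∂(gaussianReal 0 v) ≤ 1 := by
  calc ∫⁻ x, ENNReal.ofReal (Real.exp (-(a * x ^ 2))) ∂(gaussianReal 0 v)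
      ≤ ∫⁻ _, 1 ∂(gaussianReal 0 v) := by
        refine lintegral_mono fun x => ?_
        exact ENNReal.ofReal_le_one.mpr (Real.exp_le_one_iff.mpr (neg_nonpos.mpr (by positivity)))
    _ = 1 := by rw [lintegral_one, measure_univ]

lemma gauss_exp_bound (v : ℝ≥0) (hv : v ≠ 0) (a : ℝ) (ha : 0 < a) :
    ∫⁻ x, ENNReal.ofReal (Real.exp (-(a * x ^ 2))) ∂(gaussianReal 0 v)
      ≤ ENNReal.ofReal (Real.sqrt (1 / (2 * a * v))) := by
  have hv' : (0:ℝ) < v := NNReal.coe_pos.mpr (zero_lt_iff.mpr hv)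
  have hπ : (0:ℝ) < π := Real.pi_pos
  rw [gaussianReal_of_var_ne_zero 0 hv,
    lintegral_withDensity_eq_lintegral_mul _ (measurable_gaussianPDF 0 v)
      (by fun_prop)]
  have hb : ∀ x : ℝ, (gaussianPDF 0 v x * ENNReal.ofReal (Real.exp (-(a * x ^ 2))))
      ≤ ENNReal.ofReal ((Real.sqrt (2 * π * v))⁻¹ * Real.exp (-(a * x ^ 2))) := by
    intro x
    rw [gaussianPDF, ← ENNReal.ofReal_mul (gaussianPDFReal_nonneg 0 v x)]
    refine ENNReal.ofReal_le_ofReal ?_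
    refine mul_le_mul_of_nonneg_right ?_ (Real.exp_nonneg _)
    unfold gaussianPDFReal
    simp only [sub_zero, one_div]
    nth_rewrite 2 [← mul_one (Real.sqrt (2 * π * (v:ℝ)))⁻¹]
    refine mul_le_mul_of_nonneg_left ?_ (by positivity)
    refine Real.exp_le_one_iff.mpr (div_nonpos_iff.mpr (Or.inr ⟨neg_nonpos.mpr (sq_nonneg x), by positivity⟩))
  calc ∫⁻ x, (gaussianPDF 0 v * fun x => ENNReal.ofReal (Real.exp (-(a * x ^ 2)))) x
      ≤ ∫⁻ x, ENNReal.ofReal ((Real.sqrt (2 * π * v))⁻¹ * Real.exp (-(a * x ^ 2))) := by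
        exact lintegral_mono fun x => hb x
    _ = ENNReal.ofReal (∫ x, (Real.sqrt (2 * π * v))⁻¹ * Real.exp (-(a * x ^ 2))) := by
        rw [ofReal_integral_eq_lintegral_ofReal]
        · have : (fun x : ℝ => (Real.sqrt (2 * π * v))⁻¹ * Real.exp (-a * x ^ 2))
              = fun x : ℝ => (Real.sqrt (2 * π * v))⁻¹ * Real.exp (-(a * x ^ 2)) := by
            funext x; simp [neg_mul]
          exact this ▸ ((integrable_exp_neg_mul_sq ha).const_mul _)
        · exact Filter.Eventually.of_forall fun x => by positivity
    _ ≤ ENNReal.ofReal (Real.sqrt (1 / (2 * a * v))) := by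
        refine ENNReal.ofReal_le_ofReal ?_
        have : ∫ x : ℝ, (Real.sqrt (2 * π * v))⁻¹ * Real.exp (-(a * x ^ 2))
            = (Real.sqrt (2 * π * v))⁻¹ * ∫ x : ℝ, Real.exp (-a * x ^ 2) := by
          rw [MeasureTheory.integral_const_mul]
          refine congrArg _ (integral_congr_ae (Filter.Eventually.of_forall fun x => ?_))
          simp [neg_mul]
        rw [this, integral_gaussian]
        rw [← Real.sqrt_inv, ← Real.sqrt_mul (by positivity)]
        refine le_of_eq (congrArg Real.sqrt ?_)
        field_simp

lemma log_factorial_le (L : ℕ) (hL : 1 ≤ L) :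
    Real.log (Nat.factorial L) ≤ 1 + Real.log L / 2 + L * Real.log L - L := by
  obtain ⟨n, rfl⟩ := Nat.exists_eq_add_of_le' hL
  set L := n + 1 with hLdef
  have h1 : Real.log (Stirling.stirlingSeq L) ≤ Real.log (Stirling.stirlingSeq 1) := by
    have := Stirling.log_stirlingSeq'_antitone (Nat.zero_le n)
    simpa [Nat.succ_eq_add_one, add_comm] using this
  have hform := Stirling.log_stirlingSeq_formula L
  have hL0 : (0:ℝ) < L := by positivity
  have h2 : Real.log (Stirling.stirlingSeq 1) = 1 - Real.log 2 / 2 := by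
    rw [Stirling.stirlingSeq_one, Real.log_div (Real.exp_ne_zero 1) (by positivity),
      Real.log_exp, Real.sqrt_eq_rpow, Real.log_rpow (by norm_num)]
    ring
  have h3 : Real.log ((L:ℝ) / Real.exp 1) = Real.log L - 1 := by
    rw [Real.log_div (by positivity) (Real.exp_ne_zero 1), Real.log_exp]
  have h4 : Real.log (2 * L) = Real.log 2 + Real.log L :=
    Real.log_mul (by norm_num) (by positivity)
  have := hform ▸ h1
  rw [h2, h4, h3] at this
  nlinarith [this]

lemma log60 : (4:ℝ) < Real.log 60 := by
  have h := Real.exp_one_lt_d9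
  have h4 : Real.exp 4 < 60 := by
    have : Real.exp 4 = (Real.exp 1)^4 := by
      rw [← Real.exp_nat_mul]; norm_num
    rw [this]
    have h2 : (Real.exp 1)^4 < (2.7182818286:ℝ)^4 :=
      pow_lt_pow_left₀ h (Real.exp_pos 1).le (by norm_num)
    nlinarith [h2]
  calc (4:ℝ) = Real.log (Real.exp 4) := (Real.log_exp 4).symm
    _ < Real.log 60 := Real.log_lt_log (Real.exp_pos 4) h4

lemma endgame (m L r : ℕ) (Λ : ℝ) (hm : 1 ≤ (m:ℝ)) (hr : 1 ≤ r) (hL : 1 ≤ L) (hΛ : 1 ≤ Λ)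
    (hLx : (L:ℝ) ≤ (m:ℝ)/Λ) (hxL : (m:ℝ)/Λ < L + 1) :
    Real.exp (L/2) * Real.sqrt ((m:ℝ) * Λ^(2*(r:ℝ)-1) / L) ^ L * (Nat.factorial L : ℝ)^r / ((m:ℝ)^r)^L
      < (60*(m:ℝ)/Λ)^((r:ℝ)/2) * Real.exp (-((m:ℝ)*((r:ℝ)-1/2)/Λ)) := by
  have hΛ0 : (0:ℝ) < Λ := by linarith
  have hm0 : (0:ℝ) < m := by linarith
  have hL0 : (0:ℝ) < L := by exact_mod_cast Nat.pos_of_ne_zero (by omega)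
  have hr0 : (0:ℝ) ≤ r := by positivity
  have hr1 : (1:ℝ) ≤ r := by exact_mod_cast hr
  set x : ℝ := (m:ℝ)/Λ with hxdef
  have hx0 : 0 < x := by positivity
  set lm := Real.log m
  set lΛ := Real.log Λ
  set lL := Real.log (L:ℝ)
  have hlx : Real.log x = lm - lΛ := Real.log_div (ne_of_gt hm0) (ne_of_gt hΛ0)
  -- facts
  have ht : 0 ≤ Real.log x - lL := by
    have := Real.log_le_log hL0 hLx
    linarith
  have hLt : (L:ℝ) * (Real.log x - lL) ≤ x - L := by
    have h1 : Real.log x - lL = Real.log (x / L) := (Real.log_div (ne_of_gt hx0) (ne_of_gt hL0)).symm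
    have h2 : Real.log (x / L) ≤ x / L - 1 := Real.log_le_sub_one_of_pos (by positivity)
    rw [h1]
    calc (L:ℝ) * Real.log (x/L) ≤ L * (x/L - 1) :=
          mul_le_mul_of_nonneg_left h2 (le_of_lt hL0)
      _ = x - L := by field_simp
  have hfac : Real.log (Nat.factorial L) ≤ 1 + lL / 2 + L * lL - L := log_factorial_le L hL
  -- positivity of pieces
  have hz : (0:ℝ) < (m:ℝ) * Λ^(2*(r:ℝ)-1) / L := by positivity
  have hlogz : Real.log ((m:ℝ) * Λ^(2*(r:ℝ)-1) / L) = lm + (2*(r:ℝ)-1) * lΛ - lL := by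
    rw [Real.log_div (by positivity) (ne_of_gt hL0), Real.log_mul (ne_of_gt hm0) (by positivity),
      Real.log_rpow hΛ0]
  have e2 : Real.sqrt ((m:ℝ) * Λ^(2*(r:ℝ)-1) / L) ^ L
      = Real.exp ((L:ℝ) * ((lm + (2*(r:ℝ)-1) * lΛ - lL) / 2)) := by
    conv_lhs => rw [← Real.exp_log (Real.sqrt_pos.mpr hz)]
    rw [← Real.exp_nat_mul, Real.log_sqrt hz.le, hlogz]
  have e3 : (Nat.factorial L : ℝ)^r ≤ Real.exp ((r:ℝ) * (1 + lL/2 + L * lL - L)) := by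
    have hfp : (0:ℝ) < (Nat.factorial L : ℝ) := by
      exact_mod_cast Nat.factorial_pos L
    calc (Nat.factorial L : ℝ)^r = Real.exp ((r:ℝ) * Real.log (Nat.factorial L)) := by
          conv_lhs => rw [← Real.exp_log hfp]
          rw [← Real.exp_nat_mul]
      _ ≤ _ := Real.exp_le_exp.mpr (mul_le_mul_of_nonneg_left hfac hr0)
  have e4 : (((m:ℝ)^r)^L : ℝ) = Real.exp ((L:ℝ) * ((r:ℝ) * lm)) := by
    conv_lhs => rw [← Real.exp_log hm0]
    rw [← Real.exp_nat_mul, ← Real.exp_nat_mul]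
  have e5 : (60*(m:ℝ)/Λ)^((r:ℝ)/2) = Real.exp ((Real.log 60 + lm - lΛ) * ((r:ℝ)/2)) := by
    rw [Real.rpow_def_of_pos (by positivity)]
    congr 2
    rw [Real.log_div (by positivity) (ne_of_gt hΛ0), Real.log_mul (by norm_num) (ne_of_gt hm0)]
  have hxr : (m:ℝ)*((r:ℝ)-1/2)/Λ = x*((r:ℝ)-1/2) := by rw [hxdef]; ring
  rw [hlx] at ht hLt
  have hb : 1 + (x - (L:ℝ)) - ((L:ℝ)+1/2)*((lm - lΛ) - lL) - Real.log 60/2 < 0 := by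
    have h1 : 0 ≤ ((L:ℝ)+1/2)*((lm - lΛ) - lL) := mul_nonneg (by linarith) ht
    have := log60
    linarith
  have hrb : (r:ℝ) * (1 + (x - (L:ℝ)) - ((L:ℝ)+1/2)*((lm - lΛ) - lL) - Real.log 60/2)
      ≤ 1 + (x - (L:ℝ)) - ((L:ℝ)+1/2)*((lm - lΛ) - lL) - Real.log 60/2 := by
    have h1 : 0 ≤ ((r:ℝ) - 1) * (-(1 + (x - (L:ℝ)) - ((L:ℝ)+1/2)*((lm - lΛ) - lL)
        - Real.log 60/2)) := mul_nonneg (by linarith) (by linarith)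
    nlinarith [h1]
  calc Real.exp (L/2) * Real.sqrt ((m:ℝ) * Λ^(2*(r:ℝ)-1) / L) ^ L * (Nat.factorial L : ℝ)^r / ((m:ℝ)^r)^L
      = Real.exp ((L:ℝ)/2 + (L:ℝ) * ((lm + (2*(r:ℝ)-1) * lΛ - lL) / 2) - (L:ℝ) * ((r:ℝ) * lm))
        * (Nat.factorial L : ℝ)^r := by
        rw [e2, e4, Real.exp_sub, Real.exp_add]
        ring
    _ ≤ Real.exp ((L:ℝ)/2 + (L:ℝ) * ((lm + (2*(r:ℝ)-1) * lΛ - lL) / 2) - (L:ℝ) * ((r:ℝ) * lm))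
        * Real.exp ((r:ℝ) * (1 + lL/2 + L * lL - L)) :=
        mul_le_mul_of_nonneg_left e3 (Real.exp_pos _).le
    _ = Real.exp ((L:ℝ)/2 + (L:ℝ) * ((lm + (2*(r:ℝ)-1) * lΛ - lL) / 2) - (L:ℝ) * ((r:ℝ) * lm)
        + (r:ℝ) * (1 + lL/2 + L * lL - L)) := by rw [← Real.exp_add]
    _ < Real.exp ((Real.log 60 + lm - lΛ) * ((r:ℝ)/2) + (-((m:ℝ)*((r:ℝ)-1/2)/Λ))) := by
        refine Real.exp_lt_exp.mpr ?_
        linarith [hrb, hb, hLt, hxr]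
    _ = (60*(m:ℝ)/Λ)^((r:ℝ)/2) * Real.exp (-((m:ℝ)*((r:ℝ)-1/2)/Λ)) := by
        rw [e5, ← Real.exp_add]

/-- If `ξ_j ~ N(0, 1/m)` i.i.d., `r ≥ 1`, `c₁ > 0`, and `s_j ≥ c₁ (m/j)^r`, then for
`1 ≤ Λ ≤ m`, `P(Σ s_j² ξ_j² < c₁² Λ^{2r−1}) < (60 m/Λ)^{r/2} e^{−m(r − 1/2)/Λ}`. -/
theorem weighted_chi_square_lower_tail_power_law (m : ℕ) (hm : 0 < m)
    (r : ℕ) (hr : 0 < r) (c₁ : ℝ) (hc₁ : 0 < c₁)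
    (s : Fin m → ℝ) (hs : ∀ j : Fin m, c₁ * ((m : ℝ) / ((j : ℕ) + 1)) ^ r ≤ s j)
    (Λ : ℝ) (hΛ1 : 1 ≤ Λ) (hΛm : Λ ≤ m) :
    (Measure.pi fun _ : Fin m => gaussianReal 0 (m : NNReal)⁻¹)
      {ξ : Fin m → ℝ | ∑ j, (s j) ^ 2 * (ξ j) ^ 2 < c₁ ^ 2 * Λ ^ (2 * (r : ℝ) - 1)}
    < ENNReal.ofReal
        ((60 * m / Λ) ^ ((r : ℝ) / 2) * Real.exp (-(m * ((r : ℝ) - 1/2) / Λ))) := by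
  have hm0 : (0:ℝ) < m := by exact_mod_cast hm
  have hm1 : (1:ℝ) ≤ m := by exact_mod_cast hm
  have hΛ0 : (0:ℝ) < Λ := lt_of_lt_of_le one_pos hΛ1
  set v : ℝ≥0 := (m : NNReal)⁻¹ with hvdef
  have hv : v ≠ 0 := by
    rw [hvdef]
    simp only [ne_eq, inv_eq_zero]
    exact_mod_cast hm.ne'
  have hvr : (v:ℝ) = (m:ℝ)⁻¹ := by rw [hvdef]; push_cast; ring
  set γ : ℝ := c₁ ^ 2 * Λ ^ (2 * (r : ℝ) - 1) with hγdef
  have hγ0 : 0 < γ := by rw [hγdef]; positivity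
  set L : ℕ := ⌊(m:ℝ)/Λ⌋₊ with hLdef
  have hx1 : (1:ℝ) ≤ (m:ℝ)/Λ := (one_le_div hΛ0).mpr hΛm
  have hL1 : 1 ≤ L := Nat.le_floor (by exact_mod_cast hx1)
  have hL0 : (0:ℝ) < L := by exact_mod_cast hL1
  have hLx : (L:ℝ) ≤ (m:ℝ)/Λ := Nat.floor_le (by positivity)
  have hxL : (m:ℝ)/Λ < L + 1 := Nat.lt_floor_add_one _
  have hLm : L ≤ m := by
    have h1 : (L:ℝ) ≤ (m:ℝ) := hLx.trans (div_le_self hm0.le hΛ1)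
    exact_mod_cast h1
  set lam : ℝ := L / (2*γ) with hlamdef
  have hlam0 : 0 < lam := by rw [hlamdef]; positivity
  have hlamγ : lam * γ = (L:ℝ)/2 := by rw [hlamdef]; field_simp
  have hspos : ∀ j, 0 < s j := fun j => lt_of_lt_of_le (by positivity) (hs j)
  set a : Fin m → ℝ := fun j => lam * (s j)^2 with hadef
  have ha0 : ∀ j, 0 < a j := fun j => mul_pos hlam0 (pow_pos (hspos j) 2)
  set ν := gaussianReal 0 v with hνdef
  set μ := Measure.pi fun _ : Fin m => ν with hμdef
  set S : (Fin m → ℝ) → ℝ := fun ξ => ∑ j, (s j)^2 * (ξ j)^2 with hSdef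
  have hSmeas : Measurable S :=
    Finset.measurable_sum _ fun j _ => ((measurable_pi_apply j).pow_const 2).const_mul _
  set f : (Fin m → ℝ) → ℝ≥0∞ := fun ξ => ENNReal.ofReal (Real.exp (lam * (γ - S ξ))) with hfdef
  have hfmeas : Measurable f :=
    ENNReal.measurable_ofReal.comp (Real.measurable_exp.comp ((measurable_const.sub hSmeas).const_mul _))
  -- Step A : Markov
  have stepA : μ {ξ | S ξ < γ} ≤ ∫⁻ ξ, f ξ ∂μ := by
    rw [← setLIntegral_one]
    refine le_trans (setLIntegral_mono hfmeas ?_) (setLIntegral_le_lintegral _ _)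
    intro ξ hξ
    have h1 : 0 ≤ lam * (γ - S ξ) := le_of_lt (mul_pos hlam0 (sub_pos.mpr hξ))
    exact ENNReal.one_le_ofReal.mpr (Real.one_le_exp h1)
  -- Step B : factorization
  have hgmeas : ∀ j : Fin m, Measurable fun t : ℝ => ENNReal.ofReal (Real.exp (-(a j * t^2))) :=
    fun j => ENNReal.measurable_ofReal.comp
      (Real.measurable_exp.comp (((measurable_id.pow_const 2).const_mul (a j)).neg))
  have hprodmeas : Measurable fun ξ : Fin m → ℝ => ∏ j, ENNReal.ofReal (Real.exp (-(a j * (ξ j)^2))) :=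
    Finset.measurable_prod _ fun j _ => (hgmeas j).comp (measurable_pi_apply j)
  have stepB : ∫⁻ ξ, f ξ ∂μ
      = ENNReal.ofReal (Real.exp (lam*γ)) * ∏ j, ∫⁻ t, ENNReal.ofReal (Real.exp (-(a j * t^2))) ∂ν := by
    have hfeq : f = fun ξ => ENNReal.ofReal (Real.exp (lam*γ))
        * ∏ j, ENNReal.ofReal (Real.exp (-(a j * (ξ j)^2))) := by
      funext ξ
      rw [hfdef]
      simp only
      rw [← ENNReal.ofReal_prod_of_nonneg (fun i _ => Real.exp_nonneg _), ← Real.exp_sum,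
        ← ENNReal.ofReal_mul (Real.exp_nonneg _), ← Real.exp_add]
      congr 1
      rw [hSdef, hadef]
      simp only
      rw [mul_sub, Finset.mul_sum, sub_eq_add_neg, ← Finset.sum_neg_distrib]
      simp only [mul_assoc]
    rw [hfeq, lintegral_const_mul _ hprodmeas,
      lintegral_pi_prod _ (fun _ => inferInstance) _ hgmeas]
  -- Step C : per-coordinate bounds
  have stepC : (∏ j, ∫⁻ t, ENNReal.ofReal (Real.exp (-(a j * t^2))) ∂ν)
      ≤ ∏ j : Fin m, (if (j:ℕ) < L then ENNReal.ofReal (Real.sqrt (1/(2 * a j * v))) else 1) := by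
    refine Finset.prod_le_prod' fun j _ => ?_
    by_cases hj : (j:ℕ) < L
    · simp only [hj, if_true]
      exact gauss_exp_bound v hv (a j) (ha0 j)
    · simp only [hj, if_false]
      exact gauss_exp_le_one v (a j) (ha0 j).le
  set T : Finset (Fin m) := Finset.univ.filter (fun j => (j:ℕ) < L) with hTdef
  have hsplit : (∏ j : Fin m, (if (j:ℕ) < L then ENNReal.ofReal (Real.sqrt (1/(2 * a j * v))) else 1))
      = ∏ j ∈ T, ENNReal.ofReal (Real.sqrt (1/(2 * a j * v))) := by
    rw [Finset.prod_ite, Finset.prod_const_one, mul_one]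
  have hofprod : ∏ j ∈ T, ENNReal.ofReal (Real.sqrt (1/(2 * a j * v)))
      = ENNReal.ofReal (∏ j ∈ T, Real.sqrt (1/(2 * a j * v))) :=
    (ENNReal.ofReal_prod_of_nonneg fun i _ => Real.sqrt_nonneg _).symm
  have hbij : ∀ g : ℕ → ℝ, ∏ j ∈ T, g (j:ℕ) = ∏ i ∈ Finset.range L, g i := by
    intro g
    refine Finset.prod_bij' (fun j _ => (j:ℕ)) (fun i hi => ⟨i, ?_⟩) ?_ ?_ ?_ ?_ ?_
    · exact lt_of_lt_of_le (Finset.mem_range.mp hi) hLm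
    · intro j hj
      exact Finset.mem_range.mpr ((Finset.mem_filter.mp hj).2)
    · intro i hi
      refine Finset.mem_filter.mpr ⟨Finset.mem_univ _, ?_⟩
      exact Finset.mem_range.mp hi
    · intro j hj; rfl
    · intro i hi; rfl
    · intro j hj; rfl
  have hfact : ∏ i ∈ Finset.range L, ((i:ℝ)+1) = (Nat.factorial L : ℝ) := by
    rw [← Finset.prod_range_add_one_eq_factorial L]
    push_cast
    rfl
  set C : ℝ := Real.sqrt ((m:ℝ) * Λ^(2*(r:ℝ)-1) / L) / (m:ℝ)^r with hCdef
  have hsq0 : (0:ℝ) < (m:ℝ) * Λ^(2*(r:ℝ)-1) / L := by positivity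
  have hpoint : ∀ j ∈ T, Real.sqrt (1/(2 * a j * v)) ≤ C * (((j:ℕ):ℝ)+1)^r := by
    intro j _
    have hsj := hspos j
    have harg : 1/(2 * a j * v) = ((m:ℝ) * γ / L) / (s j)^2 := by
      rw [hadef, hvr, hlamdef]
      simp only
      field_simp
    rw [harg, Real.sqrt_div (by positivity), Real.sqrt_sq hsj.le]
    have hC : Real.sqrt ((m:ℝ)*γ/L) = c₁ * Real.sqrt ((m:ℝ) * Λ^(2*(r:ℝ)-1) / L) := by
      rw [hγdef, show (m:ℝ) * (c₁^2 * Λ^(2*(r:ℝ)-1)) / L = c₁^2 * ((m:ℝ) * Λ^(2*(r:ℝ)-1) / L) by ring,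
        Real.sqrt_mul (sq_nonneg c₁), Real.sqrt_sq hc₁.le]
    rw [hC]
    have hden : (0:ℝ) < c₁ * ((m:ℝ) / (((j:ℕ):ℝ)+1))^r := by positivity
    calc c₁ * Real.sqrt ((m:ℝ) * Λ^(2*(r:ℝ)-1) / L) / s j
        ≤ c₁ * Real.sqrt ((m:ℝ) * Λ^(2*(r:ℝ)-1) / L) / (c₁ * ((m:ℝ) / (((j:ℕ):ℝ)+1))^r) := by
          exact div_le_div_of_nonneg_left (by positivity) hden (hs j)
      _ = C * (((j:ℕ):ℝ)+1)^r := by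
          rw [hCdef, div_pow]
          field_simp
  have hreal : ∏ j ∈ T, Real.sqrt (1/(2*a j*v))
      ≤ Real.sqrt ((m:ℝ)*Λ^(2*(r:ℝ)-1)/L)^L * (Nat.factorial L:ℝ)^r / ((m:ℝ)^r)^L := by
    calc ∏ j ∈ T, Real.sqrt (1/(2*a j*v)) ≤ ∏ j ∈ T, (C * (((j:ℕ):ℝ)+1)^r) :=
        Finset.prod_le_prod (fun j _ => Real.sqrt_nonneg _) hpoint
      _ = ∏ i ∈ Finset.range L, (C * ((i:ℝ)+1)^r) := hbij (fun n => C * ((n:ℝ)+1)^r)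
      _ = C^L * (∏ i ∈ Finset.range L, ((i:ℝ)+1))^r := by
          rw [Finset.prod_mul_distrib, Finset.prod_const, Finset.card_range, ← Finset.prod_pow]
      _ = Real.sqrt ((m:ℝ)*Λ^(2*(r:ℝ)-1)/L)^L * (Nat.factorial L:ℝ)^r / ((m:ℝ)^r)^L := by
          rw [hfact, hCdef, div_pow]
          ring
  have main1 : μ {ξ | S ξ < γ}
      ≤ ENNReal.ofReal (Real.exp ((L:ℝ)/2) * ∏ j ∈ T, Real.sqrt (1/(2*a j*v))) := by
    calc μ {ξ | S ξ < γ} ≤ ∫⁻ ξ, f ξ ∂μ := stepA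
      _ = ENNReal.ofReal (Real.exp (lam*γ)) * ∏ j, ∫⁻ t, ENNReal.ofReal (Real.exp (-(a j * t^2))) ∂ν := stepB
      _ ≤ ENNReal.ofReal (Real.exp (lam*γ))
          * ∏ j : Fin m, (if (j:ℕ) < L then ENNReal.ofReal (Real.sqrt (1/(2 * a j * v))) else 1) :=
        mul_le_mul_right stepC _
      _ = ENNReal.ofReal (Real.exp (lam*γ)) * ENNReal.ofReal (∏ j ∈ T, Real.sqrt (1/(2*a j*v))) := by
        rw [hsplit, hofprod]
      _ = ENNReal.ofReal (Real.exp (lam*γ) * ∏ j ∈ T, Real.sqrt (1/(2*a j*v))) :=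
        (ENNReal.ofReal_mul (Real.exp_nonneg _)).symm
      _ = ENNReal.ofReal (Real.exp ((L:ℝ)/2) * ∏ j ∈ T, Real.sqrt (1/(2*a j*v))) := by
        rw [hlamγ]
  have hfinal : Real.exp ((L:ℝ)/2) * ∏ j ∈ T, Real.sqrt (1/(2*a j*v))
      < (60*(m:ℝ)/Λ)^((r:ℝ)/2) * Real.exp (-((m:ℝ)*((r:ℝ)-1/2)/Λ)) := by
    refine lt_of_le_of_lt (mul_le_mul_of_nonneg_left hreal (Real.exp_nonneg _)) ?_
    have hend := endgame m L r Λ hm1 hr hL1 hΛ1 hLx hxL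
    calc Real.exp ((L:ℝ)/2) * (Real.sqrt ((m:ℝ)*Λ^(2*(r:ℝ)-1)/L)^L * (Nat.factorial L:ℝ)^r / ((m:ℝ)^r)^L)
        = Real.exp ((L:ℝ)/2) * Real.sqrt ((m:ℝ)*Λ^(2*(r:ℝ)-1)/L)^L * (Nat.factorial L:ℝ)^r / ((m:ℝ)^r)^L := by
          ring
      _ < _ := hend
  refine lt_of_le_of_lt main1 ?_
  exact (ENNReal.ofReal_lt_ofReal_iff (by positivity)).mpr hfinal
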